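/- Let G be a maximal graph (on a fixed finite vertex set) admitting a homomorphism to the Andrásfai graph Γ_d for some d ≥ 1, and let I_1 be a maximal independent set of G. Then G admits a proper 3-coloring {I_1, I_2, I_3} such that the subgraph of G induced on I_2 ∪ I_3 has no induced matching with two edges. -/

import Mathlib

/-- The Andrásfai graph `Γ_d`: vertex set `ZMod (3*d-1)`, with `x` adjacent to `y`
iff `y - x ∈ {d, ..., 2*d-1}` (the condition is symmetrized). -/
def andrasfai (d : ℕ) : SimpleGraph (ZMod (3 * d - 1)) where
  Adj x y := x ≠ y ∧ ((d ≤ (y - x).val ∧ (y - x).val ≤ 2 * d - 1) ∨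
      (d ≤ (x - y).val ∧ (x - y).val ≤ 2 * d - 1))
  symm := ⟨fun x y h => ⟨h.1.symm, h.2.symm⟩⟩
  loopless := ⟨fun x h => h.1 rfl⟩
/-- `S` is an independent set of `G`. -/
def IndepSet {V : Type*} (G : SimpleGraph V) (S : Set V) : Prop :=
  S.Pairwise fun a b => ¬ G.Adj a b
/-- The subgraph of `G` induced on `S` has no induced matching with two edges:
there are no four distinct vertices `u, v, u', v'` in `S` with `uv` and `u'v'`
edges and no other edges among them. -/
def NoInducedTwoMatching {V : Type*} (G : SimpleGraph V) (S : Set V) : Prop :=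
  ¬ ∃ u v u' v', u ∈ S ∧ v ∈ S ∧ u' ∈ S ∧ v' ∈ S ∧
    u ≠ u' ∧ u ≠ v' ∧ v ≠ u' ∧ v ≠ v' ∧
    G.Adj u v ∧ G.Adj u' v' ∧
    ¬ G.Adj u u' ∧ ¬ G.Adj u v' ∧ ¬ G.Adj v u' ∧ ¬ G.Adj v v'


lemma zmod_val_sub_add {n : ℕ} [NeZero n] (x y : ZMod n) (h : x ≠ y) :
    (x - y).val + (y - x).val = n := by
  have h1 : y - x = -(x - y) := by ring
  haveI : NeZero (x - y) := ⟨sub_ne_zero.mpr h⟩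
  have h2 : (x - y).val ≠ 0 := by
    rw [Ne, ZMod.val_eq_zero]; exact sub_ne_zero.mpr h
  have h3 := ZMod.val_lt (x - y)
  rw [h1, ZMod.val_neg_of_ne_zero]
  omega

lemma zmod_val_sub_ite {n : ℕ} [NeZero n] (r s : ZMod n) :
    (r - s).val = if s.val ≤ r.val then r.val - s.val else r.val + n - s.val := by
  split_ifs with h
  · exact ZMod.val_sub h
  · have hne : r ≠ s := by intro e; rw [e] at h; omega
    have h2 : (s - r).val = s.val - r.val := ZMod.val_sub (by omega)
    have h3 := zmod_val_sub_add r s hne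
    have h4 := ZMod.val_lt s
    omega

lemma andrasfai_adj_iff (d : ℕ) (hd : 1 ≤ d) (b x y : ZMod (3*d-1)) :
    (andrasfai d).Adj x y ↔
      ((y - b).val + d ≤ (x - b).val ∧ (x - b).val + 1 ≤ (y - b).val + 2*d) ∨
      ((x - b).val + d ≤ (y - b).val ∧ (y - b).val + 1 ≤ (x - b).val + 2*d) := by
  haveI : NeZero (3*d-1) := ⟨by omega⟩
  have hxy : x - y = (x - b) - (y - b) := by ring
  have hyx : y - x = (y - b) - (x - b) := by ring
  have hp := ZMod.val_lt (x - b)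
  have hq := ZMod.val_lt (y - b)
  have hne : x = y ↔ (x - b).val = (y - b).val := by
    constructor
    · rintro rfl; rfl
    · intro h
      have := ZMod.val_injective _ h
      have : x - b + b = y - b + b := by rw [this]
      simpa using this
  have h1 : (x - y).val = if (y-b).val ≤ (x-b).val then (x-b).val - (y-b).val
      else (x-b).val + (3*d-1) - (y-b).val := by rw [hxy]; exact zmod_val_sub_ite _ _
  have h2 : (y - x).val = if (x-b).val ≤ (y-b).val then (y-b).val - (x-b).val
      else (y-b).val + (3*d-1) - (x-b).val := by rw [hyx]; exact zmod_val_sub_ite _ _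
  show (x ≠ y ∧ _) ↔ _
  rw [Ne, hne, h1, h2]
  split_ifs <;> omega

example : True := trivial

/-- If `G` is a maximal graph (on a fixed finite vertex set) admitting a
homomorphism to an Andrásfai graph `Γ_d`, and `I_1` is a maximal independent set
of `G`, then `G` admits a proper 3-coloring `{I_1, I_2, I_3}` such that the
subgraph induced on `I_2 ∪ I_3` has no induced matching with two edges. -/
theorem maximal_hom_andrasfai_coloring {V : Type*} [Fintype V] (d : ℕ) (hd : 1 ≤ d)
    (G : SimpleGraph V)
    (hmax : Maximal (fun G' : SimpleGraph V => Nonempty (G' →g andrasfai d)) G)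
    (I1 : Set V) (hI1 : IndepSet G I1)
    (hI1max : ∀ T : Set V, IndepSet G T → I1 ⊆ T → T = I1) :
    ∃ I2 I3 : Set V,
      IndepSet G I2 ∧ IndepSet G I3 ∧
      Disjoint I1 I2 ∧ Disjoint I1 I3 ∧ Disjoint I2 I3 ∧
      I1 ∪ I2 ∪ I3 = Set.univ ∧
      NoInducedTwoMatching G (I2 ∪ I3) := by
  classical
  haveI : NeZero (3*d-1) := ⟨by omega⟩
  obtain ⟨f⟩ := hmax.1
  -- G is the pullback of the Andrásfai graph along f
  have hpull : ∀ x y : V, G.Adj x y ↔ (x ≠ y ∧ (andrasfai d).Adj (f x) (f y)) := by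
    let Gb : SimpleGraph V :=
      { Adj := fun a b => a ≠ b ∧ (andrasfai d).Adj (f a) (f b)
        symm := ⟨fun a b h => ⟨h.1.symm, h.2.symm⟩⟩
        loopless := ⟨fun a h => h.1 rfl⟩ }
    have hle : G ≤ Gb := by
      intro a b h
      exact ⟨G.ne_of_adj h, f.map_rel h⟩
    have hge : Gb ≤ G := hmax.2 ⟨⟨⇑f, fun {a b} h => h.2⟩⟩ hle
    exact fun x y => ⟨fun h => hle h, fun h => hge h⟩
  by_cases hV : IsEmpty V
  · refine ⟨∅, ∅, Set.pairwise_empty _, Set.pairwise_empty _,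
      Set.disjoint_empty _, Set.disjoint_empty _, Set.disjoint_empty _, ?_, ?_⟩
    · apply Set.eq_univ_of_forall
      intro v
      exact (hV.false v).elim
    · rintro ⟨u, -⟩
      exact (hV.false u).elim
  rw [not_isEmpty_iff] at hV
  -- I1 is nonempty
  obtain ⟨a0, ha0⟩ : I1.Nonempty := by
    rcases I1.eq_empty_or_nonempty with h | h
    · exfalso
      obtain ⟨v⟩ := hV
      have := hI1max {v} (Set.pairwise_singleton _ _) (by rw [h]; exact Set.empty_subset _)
      rw [h] at this
      exact (Set.singleton_ne_empty v) this
    · exact h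
  -- every vertex outside I1 has a neighbor in I1
  have hnbr : ∀ v, v ∉ I1 → ∃ u ∈ I1, G.Adj v u := by
    intro v hv
    by_contra h
    push_neg at h
    have hT : IndepSet G (insert v I1) := by
      intro x hx y hy hxy
      rcases hx with rfl | hx
      · rcases hy with rfl | hy
        · exact absurd rfl hxy
        · exact h y hy
      · rcases hy with rfl | hy
        · exact fun hadj => h x hx hadj.symm
        · exact hI1 hx hy hxy
    have := hI1max _ hT (Set.subset_insert _ _)
    exact hv (this ▸ Set.mem_insert v I1)
  -- images of I1 vertices are pairwise non-adjacent
  have hJind : ∀ u ∈ I1, ∀ v ∈ I1, ¬ (andrasfai d).Adj (f u) (f v) := by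
    intro u hu v hv hadj
    by_cases huv : u = v
    · subst huv; exact (andrasfai d).irrefl hadj
    · exact hI1 hu hv huv ((hpull u v).2 ⟨huv, hadj⟩)
  -- non-adjacency to a base point in terms of val
  have hnadj_base : ∀ x c : ZMod (3*d-1), ¬ (andrasfai d).Adj x c → (x - c).val ≤ d - 1 ∨ 2*d ≤ (x - c).val := by
    intro x c hn
    have h1 := (andrasfai_adj_iff d hd c x c).not.mp hn
    have h2 : (c - c : ZMod (3*d-1)).val = 0 := by simp
    rw [h2] at h1
    push_neg at h1
    have := ZMod.val_lt (x - c)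
    omega
  -- find a base point b = f ub with all of f(I1) in the arc [b, b+d-1]
  obtain ⟨ub, hub, harc⟩ : ∃ ub ∈ I1, ∀ u ∈ I1, (f u - f ub).val ≤ d - 1 := by
    set a := f a0 with ha
    let S : Finset V := Finset.univ.filter (fun u => u ∈ I1 ∧ (a - f u).val ≤ d - 1)
    have hSne : S.Nonempty := ⟨a0, by simp [S, ha0, ha]⟩
    obtain ⟨ub, hubS, hubmax⟩ := S.exists_max_image (fun u => (a - f u).val) hSne
    simp only [S, Finset.mem_filter, Finset.mem_univ, true_and] at hubS hubmax
    refine ⟨ub, hubS.1, ?_⟩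
    intro u hu
    set m := (a - f ub).val with hm
    have hmd : m ≤ d - 1 := hubS.2
    by_cases hc : (a - f u).val ≤ d - 1
    · -- f u - f ub = (a - f ub) - (a - f u)
      have hle : (a - f u).val ≤ m := hubmax u ⟨hu, hc⟩
      have he : f u - f ub = (a - f ub) - (a - f u) := by ring
      rw [he, ZMod.val_sub hle]
      omega
    · -- here (f u - a).val ≤ d - 1
      have hna : ¬ (andrasfai d).Adj (f u) a := hJind u hu a0 ha0
      have h1 := hnadj_base (f u) a hna
      have hfua : f u ≠ a := by
        intro he
        rw [he] at hc
        simp at hc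
      have hsum := zmod_val_sub_add (f u) a hfua
      have hv : (f u - a).val ≤ d - 1 := by omega
      have he : f u - f ub = (f u - a) + (a - f ub) := by ring
      have hval : (f u - f ub).val = (f u - a).val + m := by
        rw [he]; exact ZMod.val_add_of_lt (by omega)
      -- non-adjacency of f u and f ub
      have hnb := hnadj_base (f u) (f ub) (hJind u hu ub hubS.1)
      omega
  set b := f ub with hb
  set P : V → ℕ := fun v => (f v - b).val with hP
  have hPlt : ∀ v, P v < 3*d-1 := fun v => ZMod.val_lt _
  -- numeric adjacency criteria
  have hGadj : ∀ u v : V, G.Adj u v →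
      ((P v + d ≤ P u ∧ P u + 1 ≤ P v + 2*d) ∨ (P u + d ≤ P v ∧ P v + 1 ≤ P u + 2*d)) :=
    fun u v h => (andrasfai_adj_iff d hd b (f u) (f v)).mp ((hpull u v).mp h).2
  have hGnadj : ∀ u v : V, u ≠ v → ¬ G.Adj u v →
      ¬((P v + d ≤ P u ∧ P u + 1 ≤ P v + 2*d) ∨ (P u + d ≤ P v ∧ P v + 1 ≤ P u + 2*d)) :=
    fun u v hne h hnum => h ((hpull u v).mpr ⟨hne, (andrasfai_adj_iff d hd b (f u) (f v)).mpr hnum⟩)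
  -- characterize I1
  have hI1P : ∀ v, v ∈ I1 ↔ P v ≤ d - 1 := by
    intro v
    constructor
    · intro hv; exact harc v hv
    · intro hv
      by_contra hvn
      obtain ⟨u, hu, hadj⟩ := hnbr v hvn
      have h1 := hGadj v u hadj
      have h2 : P u ≤ d - 1 := harc u hu
      omega
  refine ⟨{v | d ≤ P v ∧ P v + 1 ≤ 2*d - 1}, {v | 2*d - 1 ≤ P v}, ?_, ?_, ?_, ?_, ?_, ?_, ?_⟩
  · intro x hx y hy hxy hadj
    have := hGadj x y hadj
    simp only [Set.mem_setOf_eq] at hx hy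
    omega
  · intro x hx y hy hxy hadj
    have := hGadj x y hadj
    simp only [Set.mem_setOf_eq] at hx hy
    have := hPlt x; have := hPlt y
    omega
  · rw [Set.disjoint_left]
    intro v hv hv2
    rw [hI1P v] at hv
    simp only [Set.mem_setOf_eq] at hv2
    omega
  · rw [Set.disjoint_left]
    intro v hv hv2
    rw [hI1P v] at hv
    simp only [Set.mem_setOf_eq] at hv2
    omega
  · rw [Set.disjoint_left]
    intro v hv hv2
    simp only [Set.mem_setOf_eq] at hv hv2
    omega
  · apply Set.eq_univ_of_forall
    intro v
    simp only [Set.mem_union, Set.mem_setOf_eq, hI1P v]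
    have := hPlt v
    omega
  · rintro ⟨u, v, u', v', hu, hv, hu', hv', huu', huv', hvu', hvv', ha1, ha2, n1, n2, n3, n4⟩
    have key : ∀ w, w ∈ ({x | d ≤ P x ∧ P x + 1 ≤ 2*d - 1} ∪ {x | 2*d - 1 ≤ P x} : Set V) →
        d ≤ P w := by
      rintro w (hw | hw) <;> simp only [Set.mem_setOf_eq] at hw <;> omega
    have k1 := key u hu; have k2 := key v hv; have k3 := key u' hu'; have k4 := key v' hv'
    have l1 := hPlt u; have l2 := hPlt v; have l3 := hPlt u'; have l4 := hPlt v'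
    have m1 := hGadj u v ha1
    have m2 := hGadj u' v' ha2
    have m3 := hGnadj u u' huu' n1
    have m4 := hGnadj u v' huv' n2
    have m5 := hGnadj v u' hvu' n3
    have m6 := hGnadj v v' hvv' n4
    push_neg at m3 m4 m5 m6
    omega
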